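/- Let n ≥ 3 and let Λ ≤ SL(n,ℚ) be a subgroup whose intersection with the group U of upper unitriangular matrices is Zariski-dense in U. Then Λ contains U(kℤ) = {upper unitriangular integer matrices congruent to the identity modulo k off the diagonal} for some integer k ≥ 1, provided Λ ∩ U consists of integer matrices. -/

import Mathlib

/-- A matrix in `SL(n,ℚ)` is upper unitriangular: 1's on the diagonal, 0 below it. -/
def IsUnitriangular {n : ℕ} (x : Matrix.SpecialLinearGroup (Fin n) ℚ) : Prop :=
  (∀ i : Fin n, x.val i i = 1) ∧ ∀ i j : Fin n, j < i → x.val i j = 0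

namespace Stmt8Aux

open Matrix Finset

variable {n : ℕ}

abbrev SL (n : ℕ) := Matrix.SpecialLinearGroup (Fin n) ℚ

/-- strictly supported at distance ≥ d above diagonal -/
def SS (d : ℕ) (A : Matrix (Fin n) (Fin n) ℚ) : Prop :=
  ∀ i j : Fin n, (j : ℕ) < (i : ℕ) + d → A i j = 0

/-- all entries are k times an integer -/
def Intg (k : ℤ) (A : Matrix (Fin n) (Fin n) ℚ) : Prop :=
  ∀ i j : Fin n, ∃ a : ℤ, A i j = ((k * a : ℤ) : ℚ)

lemma SS.mono {d e : ℕ} (h : e ≤ d) {A : Matrix (Fin n) (Fin n) ℚ} (hA : SS d A) : SS e A :=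
  fun i j hj => hA i j (by omega)

lemma SS.zero (d : ℕ) : SS d (0 : Matrix (Fin n) (Fin n) ℚ) := fun _ _ _ => rfl

lemma SS.add {d : ℕ} {A B : Matrix (Fin n) (Fin n) ℚ} (hA : SS d A) (hB : SS d B) :
    SS d (A + B) := fun i j hj => by
  simp [Matrix.add_apply, hA i j hj, hB i j hj]

lemma SS.neg {d : ℕ} {A : Matrix (Fin n) (Fin n) ℚ} (hA : SS d A) : SS d (-A) :=
  fun i j hj => by simp [Matrix.neg_apply, hA i j hj]

lemma SS.smul {d : ℕ} {A : Matrix (Fin n) (Fin n) ℚ} (c : ℚ) (hA : SS d A) : SS d (c • A) :=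
  fun i j hj => by simp [Matrix.smul_apply, hA i j hj]

lemma SS.mul {d e : ℕ} {A B : Matrix (Fin n) (Fin n) ℚ} (hA : SS d A) (hB : SS e B) :
    SS (d + e) (A * B) := by
  intro i j hj
  rw [Matrix.mul_apply]
  apply Finset.sum_eq_zero
  intro r _
  by_cases h1 : (r : ℕ) < (i : ℕ) + d
  · rw [hA i r h1, zero_mul]
  · rw [hB r j (by omega), mul_zero]

lemma SS.one : SS 0 (1 : Matrix (Fin n) (Fin n) ℚ) := by
  intro i j hj
  exact Matrix.one_apply_ne (by intro h; subst h; omega)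

lemma SS.pow {d : ℕ} {A : Matrix (Fin n) (Fin n) ℚ} (hA : SS d A) (r : ℕ) : SS (d * r) (A ^ r) := by
  induction r with
  | zero => simpa using SS.one
  | succ r ih =>
      rw [pow_succ, Nat.mul_succ]
      exact ih.mul hA

lemma SS.pow' {d : ℕ} {A : Matrix (Fin n) (Fin n) ℚ} (hA : SS d A) (r : ℕ) (hr : 1 ≤ r) :
    SS d (A ^ r) := (hA.pow r).mono (Nat.le_mul_of_pos_right d (by omega))

lemma SS.eq_zero {A : Matrix (Fin n) (Fin n) ℚ} (hA : SS n A) : A = 0 := by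
  ext i j
  exact hA i j (by omega)

lemma SS.pow_eq_zero {A : Matrix (Fin n) (Fin n) ℚ} (hA : SS 1 A) {r : ℕ} (hr : n ≤ r) :
    A ^ r = 0 :=
  SS.eq_zero ((hA.pow r).mono (by omega))

lemma SS.sum {d : ℕ} {ι : Type*} {s : Finset ι} {f : ι → Matrix (Fin n) (Fin n) ℚ}
    (h : ∀ i ∈ s, SS d (f i)) : SS d (∑ i ∈ s, f i) := by
  classical
  induction s using Finset.induction with
  | empty => simpa using SS.zero d
  | insert _ _ hx ih =>
      rw [Finset.sum_insert hx]
      exact (h _ (Finset.mem_insert_self _ _)).add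
        (ih fun i hi => h i (Finset.mem_insert_of_mem hi))

lemma Intg.one_of {k : ℤ} {A : Matrix (Fin n) (Fin n) ℚ} (hA : Intg k A) : Intg 1 A := by
  intro i j
  obtain ⟨a, ha⟩ := hA i j
  exact ⟨k * a, by push_cast [ha]; ring⟩

lemma Intg.of_dvd {k k' : ℤ} {A : Matrix (Fin n) (Fin n) ℚ} (h : k ∣ k') (hA : Intg k' A) :
    Intg k A := by
  obtain ⟨t, rfl⟩ := h
  intro i j
  obtain ⟨a, ha⟩ := hA i j
  exact ⟨t * a, by push_cast [ha]; ring⟩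

lemma Intg.zero (k : ℤ) : Intg k (0 : Matrix (Fin n) (Fin n) ℚ) :=
  fun i j => ⟨0, by simp⟩

lemma Intg.one : Intg 1 (1 : Matrix (Fin n) (Fin n) ℚ) := by
  intro i j
  by_cases h : i = j
  · subst h; exact ⟨1, by simp⟩
  · exact ⟨0, by simp [Matrix.one_apply_ne h]⟩

lemma Intg.add {k : ℤ} {A B : Matrix (Fin n) (Fin n) ℚ} (hA : Intg k A) (hB : Intg k B) :
    Intg k (A + B) := by
  intro i j
  obtain ⟨a, ha⟩ := hA i j
  obtain ⟨b, hb⟩ := hB i j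
  exact ⟨a + b, by push_cast [Matrix.add_apply, ha, hb]; ring⟩

lemma Intg.neg {k : ℤ} {A : Matrix (Fin n) (Fin n) ℚ} (hA : Intg k A) : Intg k (-A) := by
  intro i j
  obtain ⟨a, ha⟩ := hA i j
  exact ⟨-a, by push_cast [Matrix.neg_apply, ha]; ring⟩

lemma Intg.mul {k : ℤ} {A B : Matrix (Fin n) (Fin n) ℚ} (hA : Intg k A) (hB : Intg 1 B) :
    Intg k (A * B) := by
  classical
  choose a ha using hA
  choose b hb using hB
  intro i j
  refine ⟨∑ r, a i r * b r j, ?_⟩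
  rw [Matrix.mul_apply]
  push_cast
  rw [Finset.mul_sum]
  refine Finset.sum_congr rfl fun r _ => ?_
  rw [ha, hb]
  push_cast
  ring

lemma Intg.pow {A : Matrix (Fin n) (Fin n) ℚ} (hA : Intg 1 A) (r : ℕ) : Intg 1 (A ^ r) := by
  induction r with
  | zero => simpa using Intg.one
  | succ r ih => rw [pow_succ]; exact ih.mul hA

lemma Intg.sum {k : ℤ} {ι : Type*} {s : Finset ι} {f : ι → Matrix (Fin n) (Fin n) ℚ}
    (h : ∀ i ∈ s, Intg k (f i)) : Intg k (∑ i ∈ s, f i) := by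
  classical
  induction s using Finset.induction with
  | empty => simpa using Intg.zero k
  | insert _ _ hx ih =>
      rw [Finset.sum_insert hx]
      exact (h _ (Finset.mem_insert_self _ _)).add
        (ih fun i hi => h i (Finset.mem_insert_of_mem hi))


/-! ### Unitriangular layer -/

def UT (d : ℕ) (x : SL n) : Prop := SS d (x.val - 1)

lemma dev_mul (x y : SL n) :
    (x * y).val - 1 = (x.val - 1) + (y.val - 1) + (x.val - 1) * (y.val - 1) := by
  have h : (x * y).val = x.val * y.val := rfl
  rw [h]
  noncomm_ring

lemma coe_inv_eq (x : SL n) {C : Matrix (Fin n) (Fin n) ℚ} (hC : C * x.val = 1) :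
    (x⁻¹).val = C := by
  have h2 : x.val * (x⁻¹).val = 1 := by
    show x.val * x.val.adjugate = 1
    rw [Matrix.mul_adjugate, x.2, one_smul]
  calc (x⁻¹).val = (C * x.val) * (x⁻¹).val := by rw [hC, one_mul]
    _ = C * (x.val * (x⁻¹).val) := by rw [mul_assoc]
    _ = C := by rw [h2, mul_one]

lemma UT.one (d : ℕ) : UT d (1 : SL n) := by
  unfold UT
  have : ((1 : SL n).val - 1) = (0 : Matrix (Fin n) (Fin n) ℚ) := by
    simp
  rw [this]
  exact SS.zero d

lemma UT.mono {d e : ℕ} (h : e ≤ d) {x : SL n} (hx : UT d x) : UT e x := SS.mono h hx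

lemma UT.mul {d : ℕ} {x y : SL n} (hx : UT d x) (hy : UT d y) : UT d (x * y) := by
  unfold UT
  rw [dev_mul]
  exact (hx.add hy).add ((SS.mul hx hy).mono (by omega))

lemma UT.mul_dev {d : ℕ} (hd : 1 ≤ d) {x y : SL n} (hx : UT d x) (hy : UT d y)
    {i j : Fin n} (hj : (j : ℕ) = (i : ℕ) + d) :
    ((x * y).val - 1) i j = (x.val - 1) i j + (y.val - 1) i j := by
  rw [dev_mul, Matrix.add_apply, Matrix.add_apply, (SS.mul hx hy) i j (by omega), add_zero]

lemma inv_val {x : SL n} (h : UT 1 x) :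
    (x⁻¹).val = ∑ r ∈ Finset.range (n + 1), (-(x.val - 1)) ^ r := by
  apply coe_inv_eq
  have hg := geom_sum_mul (-(x.val - 1)) (n + 1)
  have hz : (-(x.val - 1)) ^ (n + 1) = 0 := SS.pow_eq_zero (SS.neg h) (by omega)
  rw [hz] at hg
  calc (∑ r ∈ Finset.range (n + 1), (-(x.val - 1)) ^ r) * x.val
      = -((∑ r ∈ Finset.range (n + 1), (-(x.val - 1)) ^ r) * (-(x.val - 1) - 1)) := by
        noncomm_ring
    _ = -(0 - 1) := by rw [hg]
    _ = 1 := by noncomm_ring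

lemma dev_inv {x : SL n} (h : UT 1 x) :
    (x⁻¹).val - 1 = ∑ r ∈ Finset.range n, (-(x.val - 1)) ^ (r + 1) := by
  rw [inv_val h, Finset.sum_range_succ']
  simp

lemma UT.inv {d : ℕ} {x : SL n} (hx : UT d x) (hd : 1 ≤ d) : UT d x⁻¹ := by
  unfold UT
  rw [dev_inv (hx.mono hd)]
  exact SS.sum fun r _ => ((SS.neg hx).pow' (r + 1) (by omega))

lemma UT.inv_dev {d : ℕ} {x : SL n} (hx : UT d x) (hd : 1 ≤ d)
    {i j : Fin n} (hj : (j : ℕ) = (i : ℕ) + d) :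
    ((x⁻¹).val - 1) i j = -((x.val - 1) i j) := by
  rw [dev_inv (hx.mono hd), Matrix.sum_apply]
  rw [Finset.sum_eq_single_of_mem 0 (Finset.mem_range.mpr i.pos)]
  · simp [Matrix.neg_apply]
  · intro r _ hr
    have : SS (d * (r + 1)) ((-(x.val - 1)) ^ (r + 1)) := (SS.neg hx).pow (r + 1)
    exact this i j (by nlinarith [hj, Nat.one_le_iff_ne_zero.mpr hr])

lemma Intg.dev_inv {k : ℤ} {x : SL n} (hx : UT 1 x) (hi : Intg k (x.val - 1)) :
    Intg k ((x⁻¹).val - 1) := by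
  rw [Stmt8Aux.dev_inv hx]
  apply Intg.sum
  intro r _
  rw [pow_succ']
  exact (hi.neg).mul ((hi.one_of.neg).pow r)


/-! ### Powers -/

lemma SS.nsmul {d : ℕ} {A : Matrix (Fin n) (Fin n) ℚ} (c : ℕ) (hA : SS d A) : SS d (c • A) :=
  fun i j hj => by simp [Matrix.smul_apply, hA i j hj]

lemma Intg.nsmul {k : ℤ} {A : Matrix (Fin n) (Fin n) ℚ} (c : ℕ) (hA : Intg k A) :
    Intg k (c • A) := by
  intro i j
  obtain ⟨a, ha⟩ := hA i j
  refine ⟨c * a, ?_⟩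
  rw [Matrix.smul_apply, ha]
  push_cast
  ring

lemma Intg.nsmul_dvd {k : ℤ} {A : Matrix (Fin n) (Fin n) ℚ} {c : ℕ} (hc : k ∣ (c : ℤ))
    (hA : Intg 1 A) : Intg k (c • A) := by
  obtain ⟨t, ht⟩ := hc
  intro i j
  obtain ⟨a, ha⟩ := hA i j
  refine ⟨t * a, ?_⟩
  rw [Matrix.smul_apply, ha, nsmul_eq_mul]
  have hcq : (c : ℚ) = (k : ℚ) * (t : ℚ) := by exact_mod_cast congrArg (Int.cast : ℤ → ℚ) ht
  push_cast
  rw [hcq]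
  ring

lemma dev_pow (x : SL n) (N : ℕ) :
    (x ^ N).val - 1 = ∑ r ∈ Finset.range N, N.choose (r + 1) • (x.val - 1) ^ (r + 1) := by
  have hcoe : (x ^ N).val = x.val ^ N := rfl
  have hx : x.val = (x.val - 1) + 1 := by rw [sub_add_cancel]
  have hb := (Commute.one_right (x.val - 1)).add_pow N
  rw [hcoe]
  conv_lhs => rw [hx, hb]
  rw [Finset.sum_range_succ']
  simp only [pow_zero, one_pow, mul_one, one_mul, Nat.choose_zero_right, Nat.cast_one]
  rw [add_sub_cancel_right]
  refine Finset.sum_congr rfl fun r _ => ?_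
  rw [nsmul_eq_mul']

lemma choose_dvd_aux (m k r : ℕ) (hk : 1 ≤ k) (h1 : 1 ≤ r) (h2 : r ≤ m) :
    k ∣ (m.factorial * k).choose r := by
  set N := m.factorial * k with hN
  have hN1 : 1 ≤ N := Nat.mul_pos m.factorial_pos hk
  have key : N * Nat.choose (N - 1) (r - 1) = Nat.choose N r * r := by
    have h := Nat.add_one_mul_choose_eq (N - 1) (r - 1)
    have e1 : N - 1 + 1 = N := by omega
    have e2 : r - 1 + 1 = r := by omega
    rwa [e1, e2] at h
  obtain ⟨t, ht⟩ := Nat.dvd_factorial h1 h2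
  have hr0 : 0 < r := h1
  have : Nat.choose N r * r = (k * (t * Nat.choose (N - 1) (r - 1))) * r := by
    rw [← key, hN, ht]; ring
  have := Nat.eq_of_mul_eq_mul_right hr0 this
  exact ⟨_, this⟩

lemma UT.pow {d : ℕ} {x : SL n} (hx : UT d x) (N : ℕ) : UT d (x ^ N) := by
  unfold UT
  rw [dev_pow]
  exact SS.sum fun r _ => (hx.pow' (r + 1) (by omega)).nsmul _

lemma UT.pow_dev {d : ℕ} (hd : 1 ≤ d) {x : SL n} (hx : UT d x) (N : ℕ)
    {i j : Fin n} (hj : (j : ℕ) = (i : ℕ) + d) :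
    ((x ^ N).val - 1) i j = (N : ℚ) * ((x.val - 1) i j) := by
  rw [dev_pow, Matrix.sum_apply]
  by_cases hN : N = 0
  · subst hN; simp
  rw [Finset.sum_eq_single_of_mem 0 (Finset.mem_range.mpr (by omega))]
  · simp [Matrix.smul_apply]
  · intro r _ hr
    have h1r : 1 ≤ r := Nat.one_le_iff_ne_zero.mpr hr
    have hss : SS (d * (r + 1)) ((x.val - 1) ^ (r + 1)) := SS.pow hx (r + 1)
    rw [Matrix.smul_apply, hss i j (by nlinarith), smul_zero]

lemma Intg.pow_dev {k : ℤ} (hk : 1 ≤ k) {x : SL n} (hx : UT 1 x)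
    (hi : Intg 1 (x.val - 1)) :
    Intg k ((x ^ (n.factorial * k.toNat)).val - 1) := by
  rw [dev_pow]
  apply Intg.sum
  intro r _
  by_cases hrn : n ≤ r + 1
  · rw [SS.pow_eq_zero hx hrn]
    simpa using Intg.zero k
  · apply Intg.nsmul_dvd _ (hi.pow (r + 1))
    have := choose_dvd_aux n k.toNat (r + 1) (by omega) (by omega) (by omega)
    have h2 : (k.toNat : ℤ) = k := Int.toNat_of_nonneg (by omega)
    calc k = (k.toNat : ℤ) := h2.symm
      _ ∣ _ := Int.natCast_dvd_natCast.mpr this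

lemma Intg.pow' {k : ℤ} {x : SL n} (hx : UT 1 x) (hi : Intg k (x.val - 1)) (N : ℕ) :
    Intg k ((x ^ N).val - 1) := by
  rw [dev_pow]
  apply Intg.sum
  intro r _
  rw [pow_succ']
  exact ((hi.mul (hi.one_of.pow r)).nsmul _)

/-! ### Integer powers -/

lemma UT.zpow {d : ℕ} (hd : 1 ≤ d) {x : SL n} (hx : UT d x) (s : ℤ) : UT d (x ^ s) := by
  obtain (m | m) := s
  · rw [Int.ofNat_eq_coe, zpow_natCast]; exact hx.pow m
  · rw [zpow_negSucc]; exact (hx.pow (m + 1)).inv hd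

lemma Intg.zpow {k : ℤ} {d : ℕ} (hd : 1 ≤ d) {x : SL n} (hx : UT d x)
    (hi : Intg k (x.val - 1)) (s : ℤ) : Intg k ((x ^ s).val - 1) := by
  obtain (m | m) := s
  · rw [Int.ofNat_eq_coe, zpow_natCast]; exact Intg.pow' (hx.mono hd) hi m
  · rw [zpow_negSucc]
    exact Intg.dev_inv ((hx.pow (m + 1)).mono hd) (Intg.pow' (hx.mono hd) hi (m + 1))

lemma UT.zpow_dev {d : ℕ} (hd : 1 ≤ d) {x : SL n} (hx : UT d x) (s : ℤ)
    {i j : Fin n} (hj : (j : ℕ) = (i : ℕ) + d) :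
    ((x ^ s).val - 1) i j = (s : ℚ) * ((x.val - 1) i j) := by
  obtain (m | m) := s
  · rw [Int.ofNat_eq_coe, zpow_natCast, hx.pow_dev hd m hj]
    norm_num
  · rw [zpow_negSucc, UT.inv_dev (hx.pow (m + 1)) hd hj, hx.pow_dev hd (m + 1) hj]
    push_cast
    ring


/-! ### Commutators -/

lemma commutator_eq (x y : SL n) : x * y * x⁻¹ * y⁻¹ = (x * y) * (y * x)⁻¹ := by
  group

lemma comm_dev {d e : ℕ} (hd : 1 ≤ d) (he : 1 ≤ e) {x y : SL n}
    (hx : UT d x) (hy : UT e y) :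
    UT (d + e) (x * y * x⁻¹ * y⁻¹) ∧
      ∀ i j : Fin n, (j : ℕ) = (i : ℕ) + (d + e) →
        ((x * y * x⁻¹ * y⁻¹).val - 1) i j =
          ((x.val - 1) * (y.val - 1) - (y.val - 1) * (x.val - 1)) i j := by
  set X := x.val - 1 with hX
  set Y := y.val - 1 with hY
  have hyx : UT 1 (y * x) := (hy.mono he).mul (hx.mono hd)
  have hR : UT 1 ((y * x)⁻¹) := hyx.inv le_rfl
  have hPQ : (x * y).val - (y * x).val = X * Y - Y * X := by
    show x.val * y.val - (y.val * x.val) = X * Y - Y * X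
    rw [hX, hY]; noncomm_ring
  have hkey : (x * y * x⁻¹ * y⁻¹).val - 1 =
      (X * Y - Y * X) + (X * Y - Y * X) * (((y * x)⁻¹).val - 1) := by
    have h1 : (x * y * x⁻¹ * y⁻¹).val = (x * y).val * ((y * x)⁻¹).val := by
      rw [commutator_eq]; rfl
    have h2 : (y * x).val * ((y * x)⁻¹).val = 1 := by
      show ((y * x) * (y * x)⁻¹).val = 1
      rw [mul_inv_cancel]; rfl
    calc (x * y * x⁻¹ * y⁻¹).val - 1
        = (x * y).val * ((y * x)⁻¹).val - (y * x).val * ((y * x)⁻¹).val := by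
          rw [h1, h2]
      _ = ((x * y).val - (y * x).val) * ((y * x)⁻¹).val := by noncomm_ring
      _ = (X * Y - Y * X) * (1 + (((y * x)⁻¹).val - 1)) := by rw [hPQ]; noncomm_ring
      _ = (X * Y - Y * X) + (X * Y - Y * X) * (((y * x)⁻¹).val - 1) := by noncomm_ring
  have hssD : SS (d + e) (X * Y - Y * X) := by
    have h1 : SS (d + e) (X * Y) := SS.mul hx hy
    have h2 : SS (d + e) (Y * X) := by
      have := SS.mul hy hx
      rwa [Nat.add_comm e d] at this
    rw [sub_eq_add_neg]
    exact h1.add h2.neg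
  constructor
  · unfold UT
    rw [hkey]
    refine hssD.add ?_
    exact (hssD.mul hR).mono (by omega)
  · intro i j hj
    rw [hkey, Matrix.add_apply]
    have : SS (d + e + 1) ((X * Y - Y * X) * (((y * x)⁻¹).val - 1)) := hssD.mul hR
    rw [this i j (by omega), add_zero]


/-! ### Denominator clearing -/

lemma exists_nat_smul_mem_span_int {V : Type*} [AddCommGroup V] [Module ℚ V] (T : Set V)
    {v : V} (hv : v ∈ Submodule.span ℚ T) :
    ∃ N : ℕ, 0 < N ∧ (N : ℚ) • v ∈ Submodule.span ℤ T := by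
  induction hv using Submodule.span_induction with
  | mem x hx => exact ⟨1, one_pos, by simpa using Submodule.subset_span hx⟩
  | zero => exact ⟨1, one_pos, by simpa using Submodule.zero_mem _⟩
  | add x y hx hy ihx ihy =>
      obtain ⟨N1, hN1, h1⟩ := ihx
      obtain ⟨N2, hN2, h2⟩ := ihy
      refine ⟨N1 * N2, Nat.mul_pos hN1 hN2, ?_⟩
      rw [smul_add]
      apply Submodule.add_mem
      · have : ((N1 * N2 : ℕ) : ℚ) • x = ((N2 : ℤ) : ℚ) • ((N1 : ℚ) • x) := by
          rw [smul_smul]; push_cast; ring_nf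
        rw [this, Int.cast_smul_eq_zsmul]
        exact Submodule.smul_mem _ _ h1
      · have : ((N1 * N2 : ℕ) : ℚ) • y = ((N1 : ℤ) : ℚ) • ((N2 : ℚ) • y) := by
          rw [smul_smul]; push_cast; ring_nf
        rw [this, Int.cast_smul_eq_zsmul]
        exact Submodule.smul_mem _ _ h2
  | smul q x hx ih =>
      obtain ⟨N, hN, h⟩ := ih
      refine ⟨q.den * N, Nat.mul_pos q.pos hN, ?_⟩
      have hden : (q.den : ℚ) * q = (q.num : ℚ) := by
        have h0 : (q.den : ℚ) ≠ 0 := by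
          exact_mod_cast q.den_ne_zero
        field_simp [mul_comm, Rat.num_div_den q]
        exact Rat.den_mul_eq_num q
      have : ((q.den * N : ℕ) : ℚ) • (q • x) = ((q.num : ℤ) : ℚ) • ((N : ℚ) • x) := by
        rw [smul_smul, smul_smul]
        push_cast
        rw [← hden]
        ring_nf
      rw [this, Int.cast_smul_eq_zsmul]
      exact Submodule.smul_mem _ _ h


/-! ### IsUnitriangular vs UT -/

lemma isUni_of_ut {x : SL n} (h : UT 1 x) : IsUnitriangular x := by
  constructor
  · intro i
    have := h i i (by omega)
    have h2 : x.val i i - 1 = 0 := by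
      simpa [Matrix.sub_apply, Matrix.one_apply] using this
    linarith [h2]
  · intro i j hji
    have hji' : (j : ℕ) < (i : ℕ) := hji
    have := h i j (by omega)
    have hne : i ≠ j := by intro hh; subst hh; omega
    simpa [Matrix.sub_apply, Matrix.one_apply_ne hne] using this

lemma ut_of_isUni {x : SL n} (h : IsUnitriangular x) : UT 1 x := by
  intro i j hj
  rcases Nat.lt_or_ge (j : ℕ) (i : ℕ) with hlt | hge
  · have hne : i ≠ j := by intro hh; subst hh; omega
    rw [Matrix.sub_apply, Matrix.one_apply_ne hne, h.2 i j hlt, sub_zero]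
  · have : (j : ℕ) = (i : ℕ) := by omega
    have hij : i = j := Fin.ext this.symm
    subst hij
    simp [Matrix.sub_apply, h.1 i]

/-! ### Elementary matrices -/

def elemMat (p q : Fin n) : Matrix (Fin n) (Fin n) ℚ :=
  1 + Matrix.single p q 1

lemma elemMat_det {p q : Fin n} (hpq : (p : ℕ) < (q : ℕ)) : (elemMat p q).det = 1 := by
  have hbt : (elemMat p q).BlockTriangular id := by
    intro a b hab
    have hab' : (b : ℕ) < (a : ℕ) := hab
    unfold elemMat
    rw [Matrix.add_apply, Matrix.one_apply_ne (by intro hh; subst hh; omega),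
      Matrix.single_apply_of_ne, add_zero]
    rintro ⟨rfl, rfl⟩
    omega
  rw [Matrix.det_of_upperTriangular hbt]
  apply Finset.prod_eq_one
  intro a _
  unfold elemMat
  rw [Matrix.add_apply, Matrix.one_apply_eq, Matrix.single_apply_of_ne, add_zero]
  rintro ⟨rfl, rfl⟩
  omega

def elemSL (p q : Fin n) (hpq : (p : ℕ) < (q : ℕ)) : SL n :=
  ⟨elemMat p q, elemMat_det hpq⟩

lemma elemSL_ut {p q : Fin n} (hpq : (p : ℕ) < (q : ℕ)) : UT 1 (elemSL p q hpq) := by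
  intro a b hab
  show (elemMat p q - 1) a b = 0
  unfold elemMat
  rw [add_sub_cancel_left]
  rw [Matrix.single_apply_of_ne]
  rintro ⟨rfl, rfl⟩
  omega

lemma elemSL_apply {p q : Fin n} (hpq : (p : ℕ) < (q : ℕ)) (a b : Fin n) :
    (elemSL p q hpq).val a b = (1 : Matrix (Fin n) (Fin n) ℚ) a b
      + (if p = a ∧ q = b then 1 else 0) := by
  show (elemMat p q) a b = _
  unfold elemMat
  rw [Matrix.add_apply]
  congr 1


/-! ### The base generators, via Zariski density -/

section Density

variable {Λ : Subgroup (SL n)}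

lemma gen_base
    (hint : ∀ x ∈ Λ, IsUnitriangular x → ∀ i j : Fin n, ∃ a : ℤ, x.val i j = (a : ℚ))
    (hdense : ∀ p : MvPolynomial (Fin n × Fin n) ℚ,
      (∀ x ∈ Λ, IsUnitriangular x → MvPolynomial.eval (fun q => x.val q.1 q.2) p = 0) →
      ∀ x : SL n, IsUnitriangular x →
        MvPolynomial.eval (fun q => x.val q.1 q.2) p = 0)
    (i j : Fin n) (hij : (j : ℕ) = (i : ℕ) + 1) :
    ∃ c : SL n, c ∈ Λ ∧ ∃ M : ℤ, 1 ≤ M ∧ UT 1 c ∧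
      ∀ p q : Fin n, (q : ℕ) = (p : ℕ) + 1 →
        (c.val - 1) p q = if (p : ℕ) = (i : ℕ) then (M : ℚ) else 0 := by
  classical
  set δ : Fin n → (Fin n → ℚ) := fun p => fun t => if p = t then 1 else 0 with hδ
  set φ : SL n → (Fin n → ℚ) :=
    fun x => fun p => if h : (p : ℕ) + 1 < n then (x.val - 1) p ⟨(p : ℕ) + 1, h⟩ else 0 with hφ
  set T : Set (Fin n → ℚ) := {v | ∃ x : SL n, x ∈ Λ ∧ UT 1 x ∧ φ x = v} with hT
  -- T is an additive subgroup
  have hT0 : (0 : Fin n → ℚ) ∈ T := by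
    refine ⟨1, Λ.one_mem, UT.one 1, ?_⟩
    funext p
    simp [hφ]
  have hTadd : ∀ {a b}, a ∈ T → b ∈ T → a + b ∈ T := by
    rintro a b ⟨x, hxΛ, hxU, rfl⟩ ⟨y, hyΛ, hyU, rfl⟩
    refine ⟨x * y, Λ.mul_mem hxΛ hyΛ, hxU.mul hyU, ?_⟩
    funext p
    by_cases h : (p : ℕ) + 1 < n
    · simp only [hφ, dif_pos h, Pi.add_apply]
      exact UT.mul_dev le_rfl hxU hyU rfl
    · simp [hφ, dif_neg h]
  have hTneg : ∀ {a}, a ∈ T → -a ∈ T := by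
    rintro a ⟨x, hxΛ, hxU, rfl⟩
    refine ⟨x⁻¹, Λ.inv_mem hxΛ, hxU.inv le_rfl, ?_⟩
    funext p
    by_cases h : (p : ℕ) + 1 < n
    · simp only [hφ, dif_pos h, Pi.neg_apply]
      exact UT.inv_dev hxU le_rfl rfl
    · simp [hφ, dif_neg h]
  have hspanle : ∀ w ∈ Submodule.span ℤ T, w ∈ T := by
    intro w hw
    let G : AddSubgroup (Fin n → ℚ) :=
      { carrier := T, zero_mem' := hT0, add_mem' := hTadd, neg_mem' := hTneg }
    have hle : Submodule.span ℤ T ≤ AddSubgroup.toIntSubmodule G :=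
      Submodule.span_le.mpr (fun v hv => hv)
    exact hle hw
  -- the target vector is in the ℚ-span of T
  have hin : δ i ∈ Submodule.span ℚ T := by
    by_contra hni
    obtain ⟨f, hf0, hfmap⟩ :=
      Submodule.exists_dual_map_eq_bot_of_notMem (p := Submodule.span ℚ T) hni inferInstance
    have hfvanish : ∀ v ∈ T, f v = 0 := by
      intro v hv
      have : f v ∈ (Submodule.span ℚ T).map f :=
        Submodule.mem_map_of_mem (Submodule.subset_span hv)
      rw [hfmap] at this
      exact (Submodule.mem_bot ℚ).mp this
    set P : MvPolynomial (Fin n × Fin n) ℚ :=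
      ∑ p : Fin n, if h : (p : ℕ) + 1 < n then
        (MvPolynomial.C (f (δ p))) * MvPolynomial.X (p, ⟨(p : ℕ) + 1, h⟩) else 0 with hP
    have hEval : ∀ x : SL n, MvPolynomial.eval (fun q => x.val q.1 q.2) P
        = ∑ p : Fin n, (if h : (p : ℕ) + 1 < n then
            f (δ p) * x.val p ⟨(p : ℕ) + 1, h⟩ else 0) := by
      intro x
      rw [hP, map_sum]
      refine Finset.sum_congr rfl fun p _ => ?_
      by_cases h : (p : ℕ) + 1 < n
      · rw [dif_pos h, dif_pos h]
        simp
      · rw [dif_neg h, dif_neg h]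
        simp
    have hvan : ∀ x ∈ Λ, IsUnitriangular x →
        MvPolynomial.eval (fun q => x.val q.1 q.2) P = 0 := by
      intro x hxΛ hxU
      rw [hEval]
      have hwUT : UT 1 x := ut_of_isUni hxU
      have hTx : φ x ∈ T := ⟨x, hxΛ, hwUT, rfl⟩
      have hfx := hfvanish _ hTx
      rw [LinearMap.pi_apply_eq_sum_univ f (φ x)] at hfx
      refine Eq.trans ?_ hfx
      refine Finset.sum_congr rfl fun p _ => ?_
      by_cases h : (p : ℕ) + 1 < n
      · rw [dif_pos h]
        have hne : p ≠ (⟨(p : ℕ) + 1, h⟩ : Fin n) := by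
          intro hh
          have := congrArg Fin.val hh
          simp at this
        have : φ x p = x.val p ⟨(p : ℕ) + 1, h⟩ := by
          simp [hφ, dif_pos h, Matrix.sub_apply, Matrix.one_apply_ne hne]
        rw [this]
        rw [smul_eq_mul, mul_comm]
      · rw [dif_neg h]
        have : φ x p = 0 := by simp [hφ, dif_neg h]
        rw [this, zero_smul]
    have hall := hdense P hvan
    -- evaluate at the elementary matrix E_{i,j}
    have hjlt : (i : ℕ) + 1 < n := by
      have := j.isLt
      omega
    have hElem := hall (elemSL i ⟨(i : ℕ) + 1, hjlt⟩ (by simp))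
      (isUni_of_ut (elemSL_ut _))
    rw [hEval] at hElem
    have hsingle : ∀ p : Fin n, (if h : (p : ℕ) + 1 < n then
        f (δ p) * (elemSL i ⟨(i : ℕ) + 1, hjlt⟩ (by simp)).val p ⟨(p : ℕ) + 1, h⟩ else 0)
        = if p = i then f (δ i) else 0 := by
      intro p
      by_cases h : (p : ℕ) + 1 < n
      · rw [dif_pos h, elemSL_apply]
        have hne : p ≠ (⟨(p : ℕ) + 1, h⟩ : Fin n) := by
          intro hh
          have := congrArg Fin.val hh
          simp at this
        rw [Matrix.one_apply_ne hne]
        by_cases hpi : p = i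
        · subst hpi
          rw [if_pos ⟨rfl, rfl⟩, if_pos rfl]
          ring
        · rw [if_neg, if_neg hpi]
          · ring
          · rintro ⟨rfl, -⟩
            exact hpi rfl
      · rw [dif_neg h, if_neg]
        intro hpi
        subst hpi
        exact h hjlt
    rw [Finset.sum_congr rfl (fun p _ => hsingle p)] at hElem
    rw [Finset.sum_ite_eq' Finset.univ i (fun _ => f (δ i))] at hElem
    simp at hElem
    exact hf0 hElem
  -- clear denominators
  obtain ⟨N, hNpos, hNmem⟩ := exists_nat_smul_mem_span_int T hin
  obtain ⟨c, hcΛ, hcU, hcφ⟩ := hspanle _ hNmem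
  refine ⟨c, hcΛ, (N : ℤ), by exact_mod_cast hNpos, hcU, ?_⟩
  intro p q hq
  have h : (p : ℕ) + 1 < n := by
    have := q.isLt
    omega
  have hqe : (⟨(p : ℕ) + 1, h⟩ : Fin n) = q := by
    apply Fin.ext
    simp [hq]
  have := congrFun hcφ p
  rw [hφ] at this
  simp only [dif_pos h] at this
  rw [← hqe]
  rw [this]
  simp only [Pi.smul_apply, hδ]
  by_cases hpi : (p : ℕ) = (i : ℕ)
  · have : i = p := Fin.ext hpi.symm
    rw [if_pos hpi, this, if_pos rfl]
    norm_num
  · have : i ≠ p := by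
      intro hh
      exact hpi (congrArg Fin.val hh).symm
    rw [if_neg hpi, if_neg this]
    norm_num

lemma gen
    (hint : ∀ x ∈ Λ, IsUnitriangular x → ∀ i j : Fin n, ∃ a : ℤ, x.val i j = (a : ℚ))
    (hdense : ∀ p : MvPolynomial (Fin n × Fin n) ℚ,
      (∀ x ∈ Λ, IsUnitriangular x → MvPolynomial.eval (fun q => x.val q.1 q.2) p = 0) →
      ∀ x : SL n, IsUnitriangular x →
        MvPolynomial.eval (fun q => x.val q.1 q.2) p = 0) :
    ∀ (dm : ℕ) (i j : Fin n), (j : ℕ) = (i : ℕ) + 1 + dm →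
    ∃ c : SL n, c ∈ Λ ∧ ∃ M : ℤ, 1 ≤ M ∧ UT (1 + dm) c ∧
      ∀ p q : Fin n, (q : ℕ) = (p : ℕ) + (1 + dm) →
        (c.val - 1) p q = if (p : ℕ) = (i : ℕ) then (M : ℚ) else 0 := by
  intro dm
  induction dm with
  | zero =>
      intro i j hij
      obtain ⟨c, hcΛ, M, hM, hU, hprof⟩ := gen_base hint hdense i j (by omega)
      exact ⟨c, hcΛ, M, hM, hU, fun p q hq => hprof p q (by omega)⟩
  | succ dm ih =>
      intro i j hij
      have hjlt := j.isLt
      set d : ℕ := 1 + dm with hd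
      have hj' : (i : ℕ) + d < n := by omega
      set j' : Fin n := ⟨(i : ℕ) + d, hj'⟩ with hj'def
      have hj'v : (j' : ℕ) = (i : ℕ) + d := rfl
      obtain ⟨c₁, h1Λ, M₁, hM₁, hU₁, hprof₁⟩ := ih i j' (by omega)
      obtain ⟨c₂, h2Λ, M₂, hM₂, hU₂, hprof₂⟩ := gen_base hint hdense j' j (by omega)
      set X := c₁.val - 1 with hX
      set Y := c₂.val - 1 with hY
      have hssX : SS d X := hU₁
      have hssY : SS 1 Y := hU₂
      obtain ⟨hUc, hdev⟩ := comm_dev (d := d) (e := 1) (by omega) le_rfl hU₁ hU₂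
      refine ⟨c₁ * c₂ * c₁⁻¹ * c₂⁻¹,
        Λ.mul_mem (Λ.mul_mem (Λ.mul_mem h1Λ h2Λ) (Λ.inv_mem h1Λ)) (Λ.inv_mem h2Λ),
        M₁ * M₂, (by nlinarith : (1 : ℤ) ≤ M₁ * M₂), ?_, ?_⟩
      · have he : d + 1 = 1 + (dm + 1) := by omega
        rw [← he]
        exact hUc
      · intro p q hq
        have hq' : (q : ℕ) = (p : ℕ) + (d + 1) := by omega
        rw [hdev p q hq']
        have hr₀lt : (p : ℕ) + d < n := by omega
        set r₀ : Fin n := ⟨(p : ℕ) + d, hr₀lt⟩ with hr₀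
        have hr₀v : (r₀ : ℕ) = (p : ℕ) + d := rfl
        have hXY : (X * Y) p q = if (p : ℕ) = (i : ℕ) then ((M₁ * M₂ : ℤ) : ℚ) else 0 := by
          rw [Matrix.mul_apply]
          rw [Finset.sum_eq_single_of_mem r₀ (Finset.mem_univ _)]
          · rw [hprof₁ p r₀ (by omega), hprof₂ r₀ q (by omega)]
            by_cases hpi : (p : ℕ) = (i : ℕ)
            · rw [if_pos hpi, if_pos (by omega : (r₀ : ℕ) = (j' : ℕ)), if_pos hpi]
              push_cast
              ring
            · rw [if_neg hpi, zero_mul, if_neg hpi]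
          · intro r _ hr
            rcases Nat.lt_or_ge (r : ℕ) ((p : ℕ) + d) with hlt | hge
            · rw [hssX p r hlt, zero_mul]
            · have : (p : ℕ) + d < (r : ℕ) := by
                rcases Nat.eq_or_lt_of_le hge with heq | hlt2
                · exfalso; exact hr (Fin.ext heq.symm)
                · exact hlt2
              rw [hssY r q (by omega), mul_zero]
        have hYX : (Y * X) p q = 0 := by
          rw [Matrix.mul_apply]
          apply Finset.sum_eq_zero
          intro r _
          rcases Nat.lt_or_ge (r : ℕ) ((p : ℕ) + 1) with hlt | hge
          · rw [hssY p r hlt, zero_mul]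
          rcases Nat.eq_or_lt_of_le hge with heq | hlt2
          · rw [hprof₂ p r (by omega), hprof₁ r q (by omega)]
            by_cases hpj : (p : ℕ) = (j' : ℕ)
            · rw [if_pos hpj, if_neg (by omega : ¬((r : ℕ) = (i : ℕ))), mul_zero]
            · rw [if_neg hpj, zero_mul]
          · rw [hssX r q (by omega), mul_zero]
        rw [Matrix.sub_apply, hXY, hYX, sub_zero]

lemma intg_of_hint
    (hint : ∀ x ∈ Λ, IsUnitriangular x → ∀ i j : Fin n, ∃ a : ℤ, x.val i j = (a : ℚ))
    {x : SL n} (hx : x ∈ Λ) (hU : UT 1 x) : Intg 1 (x.val - 1) := by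
  intro i j
  obtain ⟨a, ha⟩ := hint x hx (isUni_of_ut hU) i j
  by_cases hij : i = j
  · subst hij
    refine ⟨a - 1, ?_⟩
    rw [Matrix.sub_apply, ha, Matrix.one_apply_eq]
    push_cast
    ring
  · refine ⟨a, ?_⟩
    rw [Matrix.sub_apply, ha, Matrix.one_apply_ne hij]
    push_cast
    ring

lemma main
    (hint : ∀ x ∈ Λ, IsUnitriangular x → ∀ i j : Fin n, ∃ a : ℤ, x.val i j = (a : ℚ))
    (hdense : ∀ p : MvPolynomial (Fin n × Fin n) ℚ,
      (∀ x ∈ Λ, IsUnitriangular x → MvPolynomial.eval (fun q => x.val q.1 q.2) p = 0) →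
      ∀ x : SL n, IsUnitriangular x →
        MvPolynomial.eval (fun q => x.val q.1 q.2) p = 0) :
    ∀ (m d : ℕ), 1 ≤ d → n ≤ d + m →
    ∃ k : ℤ, 1 ≤ k ∧ ∀ x : SL n, UT d x → Intg k (x.val - 1) → x ∈ Λ := by
  intro m
  induction m with
  | zero =>
      intro d hd hnd
      refine ⟨1, le_rfl, fun x hx _ => ?_⟩
      have hz : x.val - 1 = 0 := SS.eq_zero (hx.mono (by omega))
      have hx1 : x = 1 := Subtype.ext (by
        have := sub_eq_zero.mp hz
        simpa using this)
      rw [hx1]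
      exact Λ.one_mem
  | succ m ihm =>
      intro d hd hnd
      by_cases hcase : n ≤ d + m
      · exact ihm d hd hcase
      obtain ⟨k', hk'1, hk'⟩ := ihm (d + 1) (by omega) (by omega)
      classical
      have genD : ∀ i j : Fin n, (j : ℕ) = (i : ℕ) + d → ∃ c : SL n, c ∈ Λ ∧ ∃ M : ℤ,
          1 ≤ M ∧ UT d c ∧ ∀ p q : Fin n, (q : ℕ) = (p : ℕ) + d →
            (c.val - 1) p q = if (p : ℕ) = (i : ℕ) then (M : ℚ) else 0 := by
        intro i j hij
        obtain ⟨c, hc, M, hM, hU, hprof⟩ := gen hint hdense (d - 1) i j (by omega)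
        have hdd : 1 + (d - 1) = d := by omega
        rw [hdd] at hU
        exact ⟨c, hc, M, hM, hU, fun p q hq => hprof p q (by omega)⟩
      choose cfun hmem Mfun hM1 hUT hprof using genD
      set Mtot : Fin n × Fin n → ℤ :=
        fun p => if h : ((p.2 : ℕ) = (p.1 : ℕ) + d) then Mfun p.1 p.2 h else 1 with hMtot
      have hMtot1 : ∀ p, 1 ≤ Mtot p := by
        intro p
        rw [hMtot]
        dsimp only
        split
        · exact hM1 p.1 p.2 ‹_›
        · exact le_rfl
      set V : ℤ := ∏ p : Fin n × Fin n, Mtot p with hVdef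
      have hV1 : 1 ≤ V := by
        rw [hVdef]
        exact Finset.prod_induction Mtot (fun z => 1 ≤ z)
          (fun a b ha hb => by nlinarith) le_rfl (fun p _ => hMtot1 p)
      set Nn : ℕ := n.factorial * k'.toNat with hNndef
      have hNn : 1 ≤ Nn := Nat.mul_pos n.factorial_pos (by omega)
      have hNnz : (1 : ℤ) ≤ (Nn : ℤ) := by exact_mod_cast hNn
      have finish0 : ∀ x : SL n, UT d x → Intg k' (x.val - 1) →
          (∀ i j : Fin n, (j : ℕ) = (i : ℕ) + d → (x.val - 1) i j = 0) → x ∈ Λ := by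
        intro x hxU hxI hall
        have hU' : UT (d + 1) x := by
          intro a b hb
          rcases Nat.lt_or_ge (b : ℕ) ((a : ℕ) + d) with hlt | hge
          · exact hxU a b hlt
          · exact hall a b (by omega)
        exact hk' x hU' hxI
      have descent : ∀ (m' : ℕ) (x : SL n), UT d x → Intg k' (x.val - 1) →
          (∀ i j : Fin n, (j : ℕ) = (i : ℕ) + d →
            ∃ b : ℤ, (x.val - 1) i j = (((Nn : ℤ) * Mtot (i, j)) * b : ℤ)) →
          (Finset.univ.filter (fun p : Fin n × Fin n =>
            (p.2 : ℕ) = (p.1 : ℕ) + d ∧ (x.val - 1) p.1 p.2 ≠ 0)).card ≤ m' → x ∈ Λ := by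
        intro m'
        induction m' with
        | zero =>
            intro x hxU hxI hdiv hcard
            apply finish0 x hxU hxI
            intro i j hij
            by_contra hne
            have hmemf : (i, j) ∈ Finset.univ.filter (fun p : Fin n × Fin n =>
                (p.2 : ℕ) = (p.1 : ℕ) + d ∧ (x.val - 1) p.1 p.2 ≠ 0) :=
              Finset.mem_filter.mpr ⟨Finset.mem_univ _, hij, hne⟩
            have := Finset.card_pos.mpr ⟨_, hmemf⟩
            omega
        | succ m' ihd =>
            intro x hxU hxI hdiv hcard
            by_cases hz : ∀ i j : Fin n, (j : ℕ) = (i : ℕ) + d → (x.val - 1) i j = 0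
            · exact finish0 x hxU hxI hz
            push_neg at hz
            obtain ⟨i₀, j₀, hij₀, hne₀⟩ := hz
            obtain ⟨b, hb⟩ := hdiv i₀ j₀ hij₀
            set g₀ : SL n := cfun i₀ j₀ hij₀ with hg₀
            set Mc : ℤ := Mfun i₀ j₀ hij₀ with hMc
            have hMcMtot : Mtot (i₀, j₀) = Mc := by
              rw [hMtot]
              dsimp only
              rw [dif_pos hij₀]
            set g : SL n := g₀ ^ Nn with hg
            have hgΛ : g ∈ Λ := Λ.pow_mem (hmem i₀ j₀ hij₀) Nn
            have hg₀U : UT d g₀ := hUT i₀ j₀ hij₀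
            have hgU : UT d g := hg₀U.pow Nn
            have hgI : Intg k' (g.val - 1) := by
              rw [hg, hNndef]
              exact Intg.pow_dev hk'1 (hg₀U.mono (by omega))
                (intg_of_hint hint (hmem i₀ j₀ hij₀) (hg₀U.mono (by omega)))
            have hgdev : ∀ p q : Fin n, (q : ℕ) = (p : ℕ) + d →
                (g.val - 1) p q = (Nn : ℚ) * (if (p : ℕ) = (i₀ : ℕ) then (Mc : ℚ) else 0) := by
              intro p q hpq
              rw [hg, UT.pow_dev (by omega) hg₀U Nn hpq, hprof i₀ j₀ hij₀ p q hpq]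
            set y : SL n := x * g ^ (-b : ℤ) with hy
            have hgzU : UT d (g ^ (-b : ℤ)) := hgU.zpow (by omega) _
            have hgzI : Intg k' ((g ^ (-b : ℤ)).val - 1) := Intg.zpow (by omega) hgU hgI _
            have hyU : UT d y := hxU.mul hgzU
            have hyI : Intg k' (y.val - 1) := by
              rw [hy, dev_mul]
              exact (hxI.add hgzI).add (hxI.mul hgzI.one_of)
            have hyentry : ∀ p q : Fin n, (q : ℕ) = (p : ℕ) + d →
                (y.val - 1) p q = if (p : ℕ) = (i₀ : ℕ) then 0 else (x.val - 1) p q := by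
              intro p q hpq
              rw [hy, UT.mul_dev (by omega) hxU hgzU hpq,
                UT.zpow_dev (by omega) hgU (-b : ℤ) hpq, hgdev p q hpq]
              by_cases hpi : (p : ℕ) = (i₀ : ℕ)
              · rw [if_pos hpi, if_pos hpi]
                have hpe : p = i₀ := Fin.ext hpi
                have hqe : q = j₀ := Fin.ext (by omega)
                subst hpe
                subst hqe
                rw [hb, hMcMtot]
                push_cast
                ring
              · rw [if_neg hpi, if_neg hpi]
                push_cast
                ring
            have hydiv : ∀ i j : Fin n, (j : ℕ) = (i : ℕ) + d →
                ∃ b' : ℤ, (y.val - 1) i j = (((Nn : ℤ) * Mtot (i, j)) * b' : ℤ) := by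
              intro i j hij
              rw [hyentry i j hij]
              by_cases hpi : (i : ℕ) = (i₀ : ℕ)
              · rw [if_pos hpi]
                exact ⟨0, by push_cast; ring⟩
              · rw [if_neg hpi]
                exact hdiv i j hij
            have hycard : (Finset.univ.filter (fun p : Fin n × Fin n =>
                (p.2 : ℕ) = (p.1 : ℕ) + d ∧ (y.val - 1) p.1 p.2 ≠ 0)).card ≤ m' := by
              have hsub : (Finset.univ.filter (fun p : Fin n × Fin n =>
                  (p.2 : ℕ) = (p.1 : ℕ) + d ∧ (y.val - 1) p.1 p.2 ≠ 0)) ⊆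
                  (Finset.univ.filter (fun p : Fin n × Fin n =>
                  (p.2 : ℕ) = (p.1 : ℕ) + d ∧ (x.val - 1) p.1 p.2 ≠ 0)).erase (i₀, j₀) := by
                intro p hp
                obtain ⟨-, hpd, hpne⟩ := Finset.mem_filter.mp hp
                rw [hyentry p.1 p.2 hpd] at hpne
                by_cases hpi : ((p.1 : ℕ) = (i₀ : ℕ))
                · rw [if_pos hpi] at hpne
                  exact absurd rfl hpne
                · rw [if_neg hpi] at hpne
                  refine Finset.mem_erase.mpr ⟨?_, Finset.mem_filter.mpr ⟨Finset.mem_univ _, hpd, hpne⟩⟩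
                  intro hpe
                  rw [hpe] at hpi
                  exact hpi rfl
              have h1 := Finset.card_le_card hsub
              have hmemx : (i₀, j₀) ∈ Finset.univ.filter (fun p : Fin n × Fin n =>
                  (p.2 : ℕ) = (p.1 : ℕ) + d ∧ (x.val - 1) p.1 p.2 ≠ 0) :=
                Finset.mem_filter.mpr ⟨Finset.mem_univ _, hij₀, hne₀⟩
              have h2 := Finset.card_erase_of_mem hmemx
              omega
            have hyΛ : y ∈ Λ := ihd y hyU hyI hydiv hycard
            have hxy : x = y * g ^ (b : ℤ) := by
              rw [hy]
              group
            rw [hxy]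
            exact Λ.mul_mem hyΛ (Λ.zpow_mem hgΛ b)
      have hkd1 : (1 : ℤ) ≤ k' * (Nn : ℤ) * V := by
        have h1 : (1 : ℤ) ≤ k' * (Nn : ℤ) := by nlinarith
        nlinarith
      refine ⟨k' * (Nn : ℤ) * V, hkd1, ?_⟩
      intro x hxU hxI
      apply descent (Finset.univ.filter (fun p : Fin n × Fin n =>
          (p.2 : ℕ) = (p.1 : ℕ) + d ∧ (x.val - 1) p.1 p.2 ≠ 0)).card x hxU
        (hxI.of_dvd ⟨(Nn : ℤ) * V, by ring⟩) ?_ le_rfl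
      intro i j hij
      obtain ⟨a, ha⟩ := hxI i j
      obtain ⟨W, hW⟩ := Finset.dvd_prod_of_mem Mtot (Finset.mem_univ (i, j))
      refine ⟨k' * W * a, ?_⟩
      rw [ha]
      congr 1
      rw [← hVdef] at hW
      rw [hW]
      ring

end Density

end Stmt8Aux

/-- **Theorem.** Let `n ≥ 3` and `Λ ≤ SL(n,ℚ)` a subgroup whose intersection with the group
`U` of upper unitriangular matrices consists of integer matrices and is Zariski-dense in `U`
(every polynomial in the matrix entries vanishing on `Λ ∩ U` vanishes on `U`). Then `Λ`
contains `U(kℤ)` (integer unitriangular matrices with off-diagonal entries divisible by `k`)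
for some `k ≥ 1`. -/
theorem stmt8 (n : ℕ) (hn : 3 ≤ n) (Λ : Subgroup (Matrix.SpecialLinearGroup (Fin n) ℚ))
    (hint : ∀ x ∈ Λ, IsUnitriangular x → ∀ i j : Fin n, ∃ a : ℤ, x.val i j = (a : ℚ))
    (hdense : ∀ p : MvPolynomial (Fin n × Fin n) ℚ,
      (∀ x ∈ Λ, IsUnitriangular x → MvPolynomial.eval (fun q => x.val q.1 q.2) p = 0) →
      ∀ x : Matrix.SpecialLinearGroup (Fin n) ℚ, IsUnitriangular x →
        MvPolynomial.eval (fun q => x.val q.1 q.2) p = 0) :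
    ∃ k : ℤ, 1 ≤ k ∧ ∀ x : Matrix.SpecialLinearGroup (Fin n) ℚ, IsUnitriangular x →
      (∀ i j : Fin n, i ≠ j → ∃ a : ℤ, x.val i j = ((k * a : ℤ) : ℚ)) → x ∈ Λ := by
  obtain ⟨k, hk1, hk⟩ := Stmt8Aux.main (Λ := Λ) hint hdense n 1 le_rfl (by omega)
  refine ⟨k, hk1, ?_⟩
  intro x hxU hxdvd
  apply hk x (Stmt8Aux.ut_of_isUni hxU)
  intro i j
  by_cases hij : i = j
  · subst hij
    exact ⟨0, by simp [Matrix.sub_apply, hxU.1 i]⟩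
  · obtain ⟨a, ha⟩ := hxdvd i j hij
    exact ⟨a, by rw [Matrix.sub_apply, Matrix.one_apply_ne hij, ha, sub_zero]⟩
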